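/- Let m ≥ 1. Let L be the 2m×2m integer matrix with L_{ii} = 2, L_{i,i+1} = L_{i+1,i} = 1, other entries 0, and let M be the 2m×2m integer matrix with M_{ii} = 2, M_{i,i+1} = M_{i+1,i} = −1, other entries 0; both are invertible over ℚ. If c ∈ ℤ^{2m} is a z-superstable configuration for the chip-firing pair (L, M), then c is palindromic: c_i = c_{2m+1−i} for all 1 ≤ i ≤ 2m. -/
import Mathlib

open Matrix Finset

namespace CFAux

variable {n : ℕ} {α : Type*} [CommRing α]

def RevSym (A : Matrix (Fin n) (Fin n) α) : Prop := ∀ i j, A i.rev j.rev = A i j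

theorem RevSym.mulVec_rev {A : Matrix (Fin n) (Fin n) α} (hA : RevSym A) (x : Fin n → α)
    (i : Fin n) : A.mulVec (fun j => x j.rev) i = A.mulVec x i.rev := by
  simp only [Matrix.mulVec, dotProduct]
  refine Fintype.sum_equiv Fin.revPerm _ _ fun k => ?_
  simp only [Fin.revPerm_apply]
  rw [← hA i k]

theorem RevSym.mul {A B : Matrix (Fin n) (Fin n) α} (hA : RevSym A) (hB : RevSym B) :
    RevSym (A * B) := by
  intro i j
  rw [Matrix.mul_apply, Matrix.mul_apply]
  refine Fintype.sum_equiv Fin.revPerm _ _ fun k => ?_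
  simp only [Fin.revPerm_apply]
  have e1 := hA i k.rev
  rw [Fin.rev_rev] at e1
  have e2 := hB k.rev j
  rw [Fin.rev_rev] at e2
  rw [e1, e2]

theorem RevSym.inv {A : Matrix (Fin n) (Fin n) α} [DecidableEq α]
    (hA : RevSym A) (h : IsUnit A) : RevSym A⁻¹ := by
  have hdet := (Matrix.isUnit_iff_isUnit_det A).mp h
  have h1 : A * Matrix.of (fun i j => A⁻¹ i.rev j.rev) = 1 := by
    ext i j
    rw [Matrix.mul_apply]
    calc ∑ k, A i k * (Matrix.of (fun i j => A⁻¹ i.rev j.rev)) k j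
        = ∑ k, A i.rev k * A⁻¹ k j.rev := by
          refine Fintype.sum_equiv Fin.revPerm _ _ fun k => ?_
          simp only [Fin.revPerm_apply, Matrix.of_apply]
          have e1 := hA i k
          rw [← e1]
      _ = (A * A⁻¹) i.rev j.rev := (Matrix.mul_apply).symm
      _ = (1 : Matrix (Fin n) (Fin n) α) i.rev j.rev := by
          rw [Matrix.mul_nonsing_inv A hdet]
      _ = (1 : Matrix (Fin n) (Fin n) α) i j := by
          simp [Matrix.one_apply, Fin.rev_inj]
  have h2 := Matrix.inv_eq_right_inv h1
  intro i j
  conv_rhs => rw [h2]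
  rfl

theorem tridiag_mulVec (d o : ℤ) (B : Matrix (Fin n) (Fin n) ℤ)
    (hB : ∀ i j, B i j = if i = j then d
      else if (i : ℕ) + 1 = (j : ℕ) ∨ (j : ℕ) + 1 = (i : ℕ) then o else 0)
    (z : Fin n → ℤ) (i : Fin n) :
    B.mulVec z i = d * z i
      + (if h : (i : ℕ) + 1 < n then o * z ⟨(i : ℕ) + 1, h⟩ else 0)
      + (if h : 1 ≤ (i : ℕ) then o * z ⟨(i : ℕ) - 1, (Nat.sub_le _ _).trans_lt i.isLt⟩ else 0) := by
  have hsplit : ∀ j, B i j * z j =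
      (if j = i then d * z j else 0) + ((if (i : ℕ) + 1 = (j : ℕ) then o * z j else 0)
        + (if (j : ℕ) + 1 = (i : ℕ) then o * z j else 0)) := by
    intro j
    rw [hB]
    rcases eq_or_ne i j with h1 | h1
    · subst h1
      have h2 : ¬((i : ℕ) + 1 = (i : ℕ)) := by omega
      simp [h2]
    · rw [if_neg h1, if_neg (show ¬ j = i from fun h => h1 h.symm)]
      by_cases h2 : (i : ℕ) + 1 = (j : ℕ)
      · have h3 : ¬((j : ℕ) + 1 = (i : ℕ)) := by omega
        simp [h2, h3]
      · by_cases h3 : (j : ℕ) + 1 = (i : ℕ) <;> simp [h2, h3]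
  have e1 : ∑ j : Fin n, (if j = i then d * z j else 0) = d * z i := by
    simp
  have e2 : ∑ j : Fin n, (if (i : ℕ) + 1 = (j : ℕ) then o * z j else 0)
      = (if h : (i : ℕ) + 1 < n then o * z ⟨(i : ℕ) + 1, h⟩ else 0) := by
    by_cases h : (i : ℕ) + 1 < n
    · rw [dif_pos h, Finset.sum_eq_single (⟨(i : ℕ) + 1, h⟩ : Fin n)]
      · rw [if_pos rfl]
      · intro b _ hb
        rw [if_neg]
        intro hcnd
        exact hb (Fin.ext hcnd.symm)
      · intro h'
        exact absurd (Finset.mem_univ _) h'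
    · rw [dif_neg h, Finset.sum_eq_zero]
      intro j _
      rw [if_neg]
      have := j.isLt
      omega
  have e3 : ∑ j : Fin n, (if (j : ℕ) + 1 = (i : ℕ) then o * z j else 0)
      = (if h : 1 ≤ (i : ℕ) then o * z ⟨(i : ℕ) - 1, (Nat.sub_le _ _).trans_lt i.isLt⟩ else 0) := by
    by_cases h : 1 ≤ (i : ℕ)
    · rw [dif_pos h, Finset.sum_eq_single (⟨(i : ℕ) - 1, (Nat.sub_le _ _).trans_lt i.isLt⟩ : Fin n)]
      · rw [if_pos (show (i : ℕ) - 1 + 1 = (i : ℕ) by omega)]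
      · intro b _ hb
        rw [if_neg]
        intro hcnd
        exact hb (Fin.ext (show (b : ℕ) = (i : ℕ) - 1 by omega))
      · intro h'
        exact absurd (Finset.mem_univ _) h'
    · rw [dif_neg h, Finset.sum_eq_zero]
      intro j _
      rw [if_neg]
      omega
  calc B.mulVec z i = ∑ j : Fin n, B i j * z j := rfl
    _ = ∑ j : Fin n, ((if j = i then d * z j else 0) + ((if (i : ℕ) + 1 = (j : ℕ) then o * z j else 0)
        + (if (j : ℕ) + 1 = (i : ℕ) then o * z j else 0))) := Finset.sum_congr rfl fun j _ => hsplit j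
    _ = _ := by
        rw [Finset.sum_add_distrib, Finset.sum_add_distrib, e1, e2, e3]
        ring


def auxU (m : ℕ) (c : Fin (2*m) → ℤ) : ℕ → ℤ :=
  fun k => if h : k < 2*m then (-1 : ℤ)^k * (c ⟨k, h⟩ - c (Fin.rev ⟨k, h⟩)) else 0

def auxQ (m : ℕ) (c : Fin (2*m) → ℤ) : ℕ → ℤ :=
  fun k => ∑ l ∈ Finset.range (k+1), auxU m c l

def auxT (m : ℕ) (c : Fin (2*m) → ℤ) : ℤ := ∑ k ∈ Finset.range (2*m), auxU m c k

def auxS (m : ℕ) (c : Fin (2*m) → ℤ) : ℤ := ∑ k ∈ Finset.range (2*m), auxQ m c k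

def auxA (m : ℕ) (c : Fin (2*m) → ℤ) : ℤ := ((m : ℤ)+1) * auxT m c - auxS m c

def auxt (m : ℕ) (c : Fin (2*m) → ℤ) : ℕ → ℤ :=
  fun j => ((j : ℤ)+1) * auxA m c - ∑ k ∈ Finset.range j, auxQ m c k

def auxZ (m : ℕ) (c : Fin (2*m) → ℤ) : Fin (2*m) → ℤ :=
  fun i => (-1 : ℤ)^(i : ℕ) * auxt m c i

theorem auxU_pal (m : ℕ) (hm : 1 ≤ m) (c : Fin (2*m) → ℤ) (k : ℕ) (hk : k < 2*m) :
    auxU m c (2*m-1-k) = auxU m c k := by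
  have h2 : 2*m-1-k < 2*m := by omega
  simp only [auxU, dif_pos h2, dif_pos hk]
  have e1 : (⟨2*m-1-k, h2⟩ : Fin (2*m)).rev = ⟨k, hk⟩ := Fin.ext (by simp [Fin.val_rev]; omega)
  have e2 : (⟨k, hk⟩ : Fin (2*m)).rev = ⟨2*m-1-k, h2⟩ := Fin.ext (by simp [Fin.val_rev]; omega)
  rw [e1, e2]
  have hsgn : (-1 : ℤ)^(2*m-1-k) = -(-1 : ℤ)^k := by
    have h3 : 2*m-1-k + k = 2*m-1 := by omega
    have h4 : (-1 : ℤ)^(2*m-1-k) * (-1)^k = (-1)^(2*m-1) := by rw [← pow_add, h3]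
    have hodd : Odd (2*m-1) := ⟨m-1, by omega⟩
    rw [hodd.neg_one_pow] at h4
    have hk2 : (-1 : ℤ)^k * (-1)^k = 1 := by
      rw [← pow_add]; exact Even.neg_one_pow ⟨k, rfl⟩
    calc (-1 : ℤ)^(2*m-1-k) = (-1 : ℤ)^(2*m-1-k) * ((-1)^k * (-1)^k) := by rw [hk2, mul_one]
      _ = ((-1 : ℤ)^(2*m-1-k) * (-1)^k) * (-1)^k := by ring
      _ = -1 * (-1)^k := by rw [h4]
      _ = -(-1 : ℤ)^k := by ring
  rw [hsgn]
  ring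

theorem aux_two_S (m : ℕ) (hm : 1 ≤ m) (c : Fin (2*m) → ℤ) :
    2 * auxS m c = (2*(m : ℤ)+1) * auxT m c := by
  have hrefl : auxS m c = ∑ k ∈ range (2*m), auxQ m c (2*m-1-k) :=
    (Finset.sum_range_reflect (fun k => auxQ m c k) (2*m)).symm
  have hpair : ∀ k ∈ range (2*m), auxQ m c k + auxQ m c (2*m-1-k) = auxT m c + auxU m c k := by
    intro k hk'
    have hk : k < 2*m := mem_range.mp hk'
    have e1 : auxQ m c (2*m-1-k) = ∑ l ∈ range (2*m - k), auxU m c l := by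
      simp only [auxQ]
      rw [show 2*m-1-k+1 = 2*m - k from by omega]
    have e2 : auxT m c = ∑ l ∈ range (2*m - k), auxU m c l
        + ∑ j ∈ range k, auxU m c (2*m - k + j) := by
      simp only [auxT]
      rw [← Finset.sum_range_add, show 2*m - k + k = 2*m from by omega]
    have e3 : ∀ j ∈ range k, auxU m c (2*m - k + j) = auxU m c (k - 1 - j) := by
      intro j hj
      have hj' : j < k := mem_range.mp hj
      have hidx : 2*m - k + j = 2*m - 1 - (k - 1 - j) := by omega
      rw [hidx]
      exact auxU_pal m hm c _ (by omega)
    have e4 : ∑ j ∈ range k, auxU m c (2*m - k + j) = ∑ j ∈ range k, auxU m c j := by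
      rw [Finset.sum_congr rfl e3]
      exact Finset.sum_range_reflect (fun j => auxU m c j) k
    have e5 : auxQ m c k = ∑ j ∈ range k, auxU m c j + auxU m c k := by
      simp [auxQ, Finset.sum_range_succ]
    rw [e1, e5]
    linarith [e2, e4]
  calc 2 * auxS m c = auxS m c + auxS m c := by ring
    _ = ∑ k ∈ range (2*m), auxQ m c k + ∑ k ∈ range (2*m), auxQ m c (2*m-1-k) := by
        rw [← hrefl]; rfl
    _ = ∑ k ∈ range (2*m), (auxQ m c k + auxQ m c (2*m-1-k)) := (Finset.sum_add_distrib).symm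
    _ = ∑ k ∈ range (2*m), (auxT m c + auxU m c k) := Finset.sum_congr rfl hpair
    _ = (range (2*m)).card • auxT m c + auxT m c := by
        rw [Finset.sum_add_distrib, Finset.sum_const]
        rfl
    _ = (2*(m : ℤ)+1) * auxT m c := by
        rw [card_range, nsmul_eq_mul]
        push_cast
        ring

theorem auxA_spec (m : ℕ) (hm : 1 ≤ m) (c : Fin (2*m) → ℤ) :
    (2*(m : ℤ)+1) * auxA m c = auxS m c := by
  have h := aux_two_S m hm c
  simp only [auxA]
  linear_combination (-(m : ℤ) - 1) * h

theorem auxt_succ (m : ℕ) (c : Fin (2*m) → ℤ) (j : ℕ) :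
    auxt m c (j+1) = auxt m c j + auxA m c - auxQ m c j := by
  simp only [auxt, Finset.sum_range_succ]
  push_cast
  ring

theorem auxt_zero (m : ℕ) (c : Fin (2*m) → ℤ) : auxt m c 0 = auxA m c := by
  simp [auxt]

theorem auxt_top (m : ℕ) (hm : 1 ≤ m) (c : Fin (2*m) → ℤ) : auxt m c (2*m) = 0 := by
  have h := auxA_spec m hm c
  simp only [auxt, auxS] at *
  push_cast
  linear_combination h

theorem auxt_mid (m : ℕ) (c : Fin (2*m) → ℤ) (k : ℕ) (hk : 1 ≤ k) :
    auxt m c (k-1) + auxt m c (k+1) = 2 * auxt m c k - auxU m c k := by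
  have h1 := auxt_succ m c k
  have h2 := auxt_succ m c (k-1)
  rw [Nat.sub_add_cancel hk] at h2
  have h3 : auxQ m c k = auxQ m c (k-1) + auxU m c k := by
    simp only [auxQ]
    have hkk : k + 1 = (k-1+1) + 1 := by omega
    rw [hkk, Finset.sum_range_succ, Nat.sub_add_cancel hk]
  linarith

theorem auxZ_spec (m : ℕ) (hm : 1 ≤ m) (c : Fin (2*m) → ℤ)
    (L : Matrix (Fin (2*m)) (Fin (2*m)) ℤ)
    (hL : ∀ i j : Fin (2*m), L i j =
      if i = j then 2
      else if (i : ℕ) + 1 = (j : ℕ) ∨ (j : ℕ) + 1 = (i : ℕ) then 1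
      else 0) :
    ∀ i, L.mulVec (auxZ m c) i = c i - c i.rev := by
  intro i
  obtain ⟨k, hklt⟩ := i
  rw [tridiag_mulVec 2 1 L hL]
  have hsq : (-1 : ℤ)^k * (-1)^k = 1 := by
    rw [← pow_add]; exact Even.neg_one_pow ⟨k, rfl⟩
  have hfin : (-1 : ℤ)^k * auxU m c k
      = c ⟨k, hklt⟩ - c (Fin.rev ⟨k, hklt⟩) := by
    simp only [auxU, dif_pos hklt]
    rw [← mul_assoc, hsq, one_mul]
  rw [← hfin]
  simp only [auxZ, Fin.val_mk]
  by_cases h0 : k = 0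
  · subst h0
    rw [dif_pos (show 0 + 1 < 2*m by omega), dif_neg (by omega)]
    have h1 := auxt_succ m c 0
    have h2 := auxt_zero m c
    have h3 : auxQ m c 0 = auxU m c 0 := by simp [auxQ]
    norm_num
    linarith
  · have hk1 : 1 ≤ k := by omega
    have hmid := auxt_mid m c k hk1
    have hsgn : (-1 : ℤ)^(k-1) = -(-1 : ℤ)^k := by
      have hkk : k = (k-1)+1 := by omega
      calc (-1 : ℤ)^(k-1) = -((-1 : ℤ)^(k-1) * (-1)) := by ring
        _ = -(-1 : ℤ)^((k-1)+1) := by rw [pow_succ]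
        _ = -(-1 : ℤ)^k := by rw [← hkk]
    by_cases htop : k+1 < 2*m
    · rw [dif_pos htop, dif_pos hk1]
      rw [hsgn]
      linear_combination (-((-1 : ℤ)^k)) * hmid
    · rw [dif_neg htop, dif_pos hk1]
      have htk1 : auxt m c (k+1) = 0 := by
        have hke : k + 1 = 2*m := by omega
        rw [hke]
        exact auxt_top m hm c
      rw [hsgn]
      linear_combination (-((-1 : ℤ)^k)) * hmid + ((-1 : ℤ)^k) * htk1

end CFAux


/-- `c ∈ S⁺` for the chip-firing pair `(L, M)`: every entry of `M·L⁻¹·c` (over ℚ) is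
nonnegative. -/
def cfValid {n : ℕ} (L M : Matrix (Fin n) (Fin n) ℤ) (c : Fin n → ℤ) : Prop :=
  ∀ i, 0 ≤ (((M.map (Int.cast : ℤ → ℚ)) * (L.map (Int.cast : ℤ → ℚ))⁻¹).mulVec
    (fun j => (c j : ℚ))) i

/-- `c` is z-superstable for the pair `(L, M)`: `c` is valid and for every nonzero
nonnegative integer vector `z`, `c - L·z` is not valid. -/
def cfZSuperstable {n : ℕ} (L M : Matrix (Fin n) (Fin n) ℤ) (c : Fin n → ℤ) : Prop :=
  cfValid L M c ∧
    ∀ z : Fin n → ℤ, (∀ i, 0 ≤ z i) → z ≠ 0 → ¬ cfValid L M (c - L.mulVec z)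

/-- Lemma `symmetry`: every z-superstable configuration of the all-negative odd cycle
`-C_{2m+1}` is palindromic. -/
theorem stmt5 (m : ℕ) (hm : 1 ≤ m)
    (L M : Matrix (Fin (2 * m)) (Fin (2 * m)) ℤ)
    (hL : ∀ i j : Fin (2 * m), L i j =
      if i = j then 2
      else if (i : ℕ) + 1 = (j : ℕ) ∨ (j : ℕ) + 1 = (i : ℕ) then 1
      else 0)
    (hM : ∀ i j : Fin (2 * m), M i j =
      if i = j then 2
      else if (i : ℕ) + 1 = (j : ℕ) ∨ (j : ℕ) + 1 = (i : ℕ) then -1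
      else 0)
    (hLinv : IsUnit (L.map (Int.cast : ℤ → ℚ)))
    (hMinv : IsUnit (M.map (Int.cast : ℤ → ℚ)))
    (c : Fin (2 * m) → ℤ) (hc : cfZSuperstable L M c) :
    ∀ i : Fin (2 * m), c i = c i.rev := by
  classical
  -- ℤ-level reversal symmetry of L and M
  have hLsymZ : CFAux.RevSym L := by
    intro i j
    rw [hL, hL]
    have hi := i.isLt
    have hj := j.isLt
    exact if_congr Fin.rev_inj rfl
      (if_congr (by simp only [Fin.val_rev]; omega) rfl rfl)
  have hMsymZ : CFAux.RevSym M := by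
    intro i j
    rw [hM, hM]
    have hi := i.isLt
    have hj := j.isLt
    exact if_congr Fin.rev_inj rfl
      (if_congr (by simp only [Fin.val_rev]; omega) rfl rfl)
  have hLsym : CFAux.RevSym (L.map (Int.cast : ℤ → ℚ)) := by
    intro i j
    simp only [Matrix.map_apply, hLsymZ i j]
  have hMsym : CFAux.RevSym (M.map (Int.cast : ℤ → ℚ)) := by
    intro i j
    simp only [Matrix.map_apply, hMsymZ i j]
  have hAsym : CFAux.RevSym (M.map (Int.cast : ℤ → ℚ) * (L.map (Int.cast : ℤ → ℚ))⁻¹) :=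
    hMsym.mul (hLsym.inv hLinv)
  -- validity is preserved by reversal
  have hvalid_rev : ∀ x : Fin (2*m) → ℤ, cfValid L M x → cfValid L M (fun i => x i.rev) := by
    intro x hx i
    exact le_of_le_of_eq (hx i.rev)
      (hAsym.mulVec_rev (fun j' => ((x j' : ℤ) : ℚ)) i).symm
  have hvalid_rev_iff : ∀ x : Fin (2*m) → ℤ,
      cfValid L M (fun i => x i.rev) ↔ cfValid L M x := by
    intro x
    constructor
    · intro h
      have h2 := hvalid_rev _ h
      have e : (fun i : Fin (2*m) => x i.rev.rev) = x := funext fun i => by rw [Fin.rev_rev]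
      rw [← e]
      exact h2
    · exact hvalid_rev x
  -- the reversed configuration is also z-superstable
  have hrc : cfZSuperstable L M (fun i => c i.rev) := by
    refine ⟨hvalid_rev c hc.1, ?_⟩
    intro z hz hzne hval
    have hz' : ∀ i, 0 ≤ (fun i : Fin (2*m) => z i.rev) i := fun i => hz i.rev
    have hzne' : (fun i : Fin (2*m) => z i.rev) ≠ 0 := by
      intro h
      apply hzne
      funext i
      have h2 := congrFun h i.rev
      simpa [Fin.rev_rev] using h2
    refine hc.2 (fun i => z i.rev) hz' hzne' ?_
    have harg : (fun i : Fin (2*m) => (c - L.mulVec (fun j => z j.rev)) i.rev)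
        = ((fun i => c i.rev) - L.mulVec z) := by
      funext i
      simp only [Pi.sub_apply]
      congr 1
      have h3 := hLsymZ.mulVec_rev z i.rev
      rw [h3, Fin.rev_rev]
    rw [← hvalid_rev_iff, harg]
    exact hval
  -- algebra: A(x - Lz) = Ax - Mz  where A = M L⁻¹ over ℚ
  have hALq : (M.map (Int.cast : ℤ → ℚ) * (L.map (Int.cast : ℤ → ℚ))⁻¹)
      * (L.map (Int.cast : ℤ → ℚ)) = M.map (Int.cast : ℤ → ℚ) := by
    rw [mul_assoc, Matrix.nonsing_inv_mul _ ((Matrix.isUnit_iff_isUnit_det _).mp hLinv), mul_one]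
  have hbridge : ∀ x z : Fin (2*m) → ℤ,
      (fun j => (((x - L.mulVec z) j : ℤ) : ℚ))
        = (fun j => ((x j : ℤ) : ℚ))
          - (L.map (Int.cast : ℤ → ℚ)).mulVec (fun j => ((z j : ℤ) : ℚ)) := by
    intro x z
    funext j
    simp only [Pi.sub_apply, Matrix.mulVec, dotProduct, Matrix.map_apply]
    push_cast
    ring
  have hApply : ∀ (x z : Fin (2*m) → ℤ) (i : Fin (2*m)),
      ((M.map (Int.cast : ℤ → ℚ) * (L.map (Int.cast : ℤ → ℚ))⁻¹).mulVec
        (fun j => (((x - L.mulVec z) j : ℤ) : ℚ))) i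
      = ((M.map (Int.cast : ℤ → ℚ) * (L.map (Int.cast : ℤ → ℚ))⁻¹).mulVec
          (fun j => ((x j : ℤ) : ℚ))) i
        - ((M.map (Int.cast : ℤ → ℚ)).mulVec (fun j => ((z j : ℤ) : ℚ))) i := by
    intro x z i
    rw [hbridge x z, Matrix.mulVec_sub, Matrix.mulVec_mulVec, hALq]
    simp [Pi.sub_apply]
  -- sign lemma: if w ≥ 0 and wᵢ = 0 then (M w)ᵢ ≤ 0
  have hsign : ∀ w : Fin (2*m) → ℤ, (∀ j, 0 ≤ w j) → ∀ i, w i = 0 →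
      ((M.map (Int.cast : ℤ → ℚ)).mulVec (fun j => ((w j : ℤ) : ℚ))) i ≤ 0 := by
    intro w hw i hwi
    have he : ((M.map (Int.cast : ℤ → ℚ)).mulVec (fun j => ((w j : ℤ) : ℚ))) i
        = ∑ j : Fin (2*m), ((M i j : ℤ) : ℚ) * ((w j : ℤ) : ℚ) := rfl
    rw [he]
    apply Finset.sum_nonpos
    intro j _
    rcases eq_or_ne i j with rfl | hne
    · simp [hwi]
    · apply mul_nonpos_of_nonpos_of_nonneg
      · rw [hM, if_neg hne]
        split_ifs <;> norm_num
      · exact_mod_cast hw j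
  -- the integer solution of L z = c - c∘rev
  have hLz := CFAux.auxZ_spec m hm c L hL
  have hcsub : c - L.mulVec (CFAux.auxZ m c) = (fun i => c i.rev) := by
    funext i
    simp only [Pi.sub_apply, hLz i]
    ring
  set zp : Fin (2*m) → ℤ := fun i => max (CFAux.auxZ m c i) 0 with hzpdef
  set zn : Fin (2*m) → ℤ := fun i => max (-(CFAux.auxZ m c i)) 0 with hzndef
  have hzp0 : ∀ i, 0 ≤ zp i := fun i => le_max_right _ _
  have hzn0 : ∀ i, 0 ≤ zn i := fun i => le_max_right _ _
  have hzsplit : ∀ i, CFAux.auxZ m c i = zp i - zn i := by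
    intro i
    simp only [hzpdef, hzndef]
    rcases le_total (CFAux.auxZ m c i) 0 with h | h
    · rw [max_eq_right h, max_eq_left (by linarith)]
      ring
    · rw [max_eq_left h, max_eq_right (by linarith)]
      ring
  have hcastsplit : (fun j => ((CFAux.auxZ m c j : ℤ) : ℚ))
      = (fun j => ((zp j : ℤ) : ℚ)) - (fun j => ((zn j : ℤ) : ℚ)) := by
    funext j
    simp only [Pi.sub_apply]
    rw [hzsplit j]
    push_cast
    ring
  set Aq := M.map (Int.cast : ℤ → ℚ) * (L.map (Int.cast : ℤ → ℚ))⁻¹ with hAq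
  set vC : Fin (2*m) → ℚ := Aq.mulVec (fun j => ((c j : ℤ) : ℚ)) with hvCdef
  set vR : Fin (2*m) → ℚ := Aq.mulVec (fun j => ((c j.rev : ℤ) : ℚ)) with hvRdef
  set wP : Fin (2*m) → ℚ
    := (M.map (Int.cast : ℤ → ℚ)).mulVec (fun j => ((zp j : ℤ) : ℚ)) with hwPdef
  set wN : Fin (2*m) → ℚ
    := (M.map (Int.cast : ℤ → ℚ)).mulVec (fun j => ((zn j : ℤ) : ℚ)) with hwNdef
  have hv : ∀ i, 0 ≤ vC i := fun i => hc.1 i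
  have hv' : ∀ i, 0 ≤ vR i := fun i => hrc.1 i
  have hMzsplit : ∀ i, ((M.map (Int.cast : ℤ → ℚ)).mulVec
      (fun j => ((CFAux.auxZ m c j : ℤ) : ℚ))) i = wP i - wN i := by
    intro i
    rw [hcastsplit, Matrix.mulVec_sub]
    rfl
  have hrelv : ∀ i, vR i = vC i - (wP i - wN i) := by
    intro i
    have h1 := hApply c (CFAux.auxZ m c) i
    rw [hcsub] at h1
    have h2 : vR i = vC i - ((M.map (Int.cast : ℤ → ℚ)).mulVec
        (fun j => ((CFAux.auxZ m c j : ℤ) : ℚ))) i := h1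
    rw [h2, hMzsplit i]
  have hzi0 : CFAux.auxZ m c = 0 := by
    by_contra hne
    have hor : zp ≠ 0 ∨ zn ≠ 0 := by
      by_contra h
      push_neg at h
      exact hne (funext fun i => by rw [hzsplit i, h.1, h.2]; simp)
    rcases hor with hzpne | hznne
    · have hns := hc.2 zp hzp0 hzpne
      unfold cfValid at hns
      obtain ⟨i, hi⟩ := not_forall.mp hns
      replace hi := not_le.mp hi
      rw [hApply c zp i] at hi
      have hi' : vC i - wP i < 0 := hi
      have hzpi : 0 < zp i := by
        by_contra hle
        have h0 : zp i = 0 := le_antisymm (not_lt.mp hle) (hzp0 i)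
        have hw := hsign zp hzp0 i h0
        have hw' : wP i ≤ 0 := hw
        linarith [hv i]
      have hzpos : 0 < CFAux.auxZ m c i := by
        by_contra hnp
        push_neg at hnp
        have h0 : zp i = 0 := by
          simp only [hzpdef]
          exact max_eq_right hnp
        omega
      have hzni : zn i = 0 := by
        simp only [hzndef]
        exact max_eq_right (by linarith)
      have hwn := hsign zn hzn0 i hzni
      have hwn' : wN i ≤ 0 := hwn
      linarith [hv' i, hrelv i]
    · have hns := hrc.2 zn hzn0 hznne
      unfold cfValid at hns
      obtain ⟨i, hi⟩ := not_forall.mp hns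
      replace hi := not_le.mp hi
      rw [hApply (fun i => c i.rev) zn i] at hi
      have hi' : vR i - wN i < 0 := hi
      have hzni : 0 < zn i := by
        by_contra hle
        have h0 : zn i = 0 := le_antisymm (not_lt.mp hle) (hzn0 i)
        have hw := hsign zn hzn0 i h0
        have hw' : wN i ≤ 0 := hw
        linarith [hv' i]
      have hzneg : CFAux.auxZ m c i < 0 := by
        by_contra hnp
        push_neg at hnp
        have h0 : zn i = 0 := by
          simp only [hzndef]
          exact max_eq_right (by linarith)
        omega
      have hzpi : zp i = 0 := by
        simp only [hzpdef]
        exact max_eq_right (by linarith)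
      have hwp := hsign zp hzp0 i hzpi
      have hwp' : wP i ≤ 0 := hwp
      linarith [hv i, hrelv i]
  intro i
  have h := hLz i
  rw [hzi0, Matrix.mulVec_zero] at h
  have h2 : (0 : ℤ) = c i - c i.rev := by simpa using h
  linarith
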